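/- arXiv:2304.10135 — 3 statements merged into one kernel-verified Lean document; each statement's English description precedes it below -/
import Mathlib

section
/- Let Γ be a finite group of order n and let M be an abelian group equipped with an action of Γ by group automorphisms, such that multiplication by n is surjective on M. Let M[n] ⊆ M[n²] ⊆ M denote the n-torsion and n²-torsion Γ-submodules. If two classes x, y ∈ H²(Γ, M[n]) have the same image in H²(Γ, M) under the map induced by the inclusion M[n] ⊆ M, then their images in H²(Γ, M[n²]) under the map induced by the inclusion M[n] ⊆ M[n²] coincide. -/
/-- The 2-cocycle condition for a function `f : Γ → Γ → M`, with respect to an action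
`ρ` of `Γ` on the abelian group `M` by group automorphisms. -/
def IsGroupTwoCocycle {Γ M : Type*} [Group Γ] [AddCommGroup M]
    (ρ : Γ →* Multiplicative (AddAut M)) (f : Γ → Γ → M) : Prop :=
  ∀ g h k : Γ, Multiplicative.toAdd (ρ g) (f h k) - f (g * h) k + f g (h * k) - f g h = 0

/-- Let `Γ` be a finite group of order `n` and `M` an abelian group with a
`Γ`-action by automorphisms such that multiplication by `n` is surjective on `M`.  If two
classes of `H²(Γ, M[n])`, represented by 2-cocycles `f, g` valued in the `n`-torsion
submodule `M[n]`, have the same image in `H²(Γ, M)` (i.e. `f - g` is the coboundary of a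
cochain `h` valued in `M`), then their images in `H²(Γ, M[n²])` coincide (i.e. `f - g` is
the coboundary of a cochain `h'` valued in the `n²`-torsion submodule `M[n²]`). -/
theorem eq_in_H2_torsion_sq_of_eq_in_H2
    {Γ M : Type*} [Group Γ] [Finite Γ] [AddCommGroup M]
    (ρ : Γ →* Multiplicative (AddAut M)) (n : ℕ) (hn : n = Nat.card Γ)
    (hdiv : ∀ m : M, ∃ m' : M, n • m' = m)
    (f g : Γ → Γ → M)
    (hf : IsGroupTwoCocycle ρ f) (hg : IsGroupTwoCocycle ρ g)
    (hfn : ∀ x y : Γ, n • f x y = 0) (hgn : ∀ x y : Γ, n • g x y = 0)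
    (h : Γ → M)
    (hh : ∀ x y : Γ, f x y - g x y = Multiplicative.toAdd (ρ x) (h y) - h (x * y) + h x) :
    ∃ h' : Γ → M, (∀ x : Γ, n ^ 2 • h' x = 0) ∧
      (∀ x y : Γ, f x y - g x y = Multiplicative.toAdd (ρ x) (h' y) - h' (x * y) + h' x) := by
  cases nonempty_fintype Γ
  -- `n • h` is a 1-cocycle
  have hzc : ∀ x y : Γ, n • h (x * y) = Multiplicative.toAdd (ρ x) (n • h y) + n • h x := by
    intro x y
    have h2 := congrArg (fun m => n • m) (hh x y)
    rw [smul_sub, hfn, hgn, sub_zero, smul_add, smul_sub] at h2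
    rw [map_nsmul]
    -- h2 : 0 = n • ρ x (h y) - n • h (x * y) + n • h x
    have h3 : n • h (x * y) - (n • Multiplicative.toAdd (ρ x) (h y) + n • h x) =
        -(n • Multiplicative.toAdd (ρ x) (h y) - n • h (x * y) + n • h x) := by
      abel
    rw [← sub_eq_zero, h3, ← h2, neg_zero]
  set c : M := ∑ γ : Γ, n • h γ with hcdef
  have key : ∀ x : Γ, n • (n • h x) = c - Multiplicative.toAdd (ρ x) c := by
    intro x
    have hsum : ∑ γ : Γ, n • h (x * γ) = c :=
      Fintype.sum_bijective (fun γ => x * γ) (Group.mulLeft_bijective x)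
        (fun γ => n • h (x * γ)) (fun γ => n • h γ) (fun _ => rfl)
    have hsum2 : ∑ γ : Γ, n • h (x * γ) = Multiplicative.toAdd (ρ x) c + n • (n • h x) := by
      calc ∑ γ : Γ, n • h (x * γ) = ∑ γ : Γ, (Multiplicative.toAdd (ρ x) (n • h γ) + n • h x) :=
            Finset.sum_congr rfl fun γ _ => hzc x γ
        _ = (∑ γ : Γ, Multiplicative.toAdd (ρ x) (n • h γ)) + ∑ _γ : Γ, n • h x := Finset.sum_add_distrib
        _ = Multiplicative.toAdd (ρ x) c + n • (n • h x) := by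
            rw [← map_sum (Multiplicative.toAdd (ρ x)) (fun γ => n • h γ) Finset.univ]
            simp only [Finset.sum_const, Finset.card_univ]
            rw [← hcdef, hn, Nat.card_eq_fintype_card]
    rw [hsum2] at hsum
    rw [eq_sub_iff_add_eq, add_comm]
    exact hsum
  -- divide `c` by `n ^ 2`
  obtain ⟨m₁, hm₁⟩ := hdiv c
  obtain ⟨m, hm⟩ := hdiv m₁
  have hm2 : n ^ 2 • m = c := by
    rw [pow_two, mul_smul, hm, hm₁]
  refine ⟨fun x => h x + (Multiplicative.toAdd (ρ x) m - m), ?_, ?_⟩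
  · intro x
    have h1 : n ^ 2 • h x = c - Multiplicative.toAdd (ρ x) c := by
      rw [pow_two, mul_comm, mul_smul]; exact key x
    have h2 : n ^ 2 • (Multiplicative.toAdd (ρ x) m - m) = Multiplicative.toAdd (ρ x) c - c := by
      rw [smul_sub, ← map_nsmul (Multiplicative.toAdd (ρ x)) (n ^ 2) m, hm2]
    rw [smul_add, h1, h2]
    abel
  · intro x y
    have heq : Multiplicative.toAdd (ρ x) (Multiplicative.toAdd (ρ y) m) = Multiplicative.toAdd (ρ (x * y)) m := by
      rw [map_mul]; rfl
    rw [hh x y]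
    simp only [map_add, map_sub, heq]
    abel
end

section
/- Let Γ be a finite group of order n, let E be a group, let M be an abelian normal subgroup of E, and let π : E → Γ be a surjective homomorphism with kernel M. Suppose that every element of M is an n-th power of an element of M. Write M[n] = {m ∈ M : mⁿ = 1}. Then there exist a group H, an injective homomorphism ι : M[n] → H with normal image, a surjective homomorphism p : H → Γ with kernel ι(M[n]), and a homomorphism φ : H → E such that φ ∘ ι : M[n] → E is the inclusion of M[n] into E and π ∘ φ = p. (Consequently E = M·φ(H), i.e. E is the pushout of the extension 1 → M[n] → H → Γ → 1 along the inclusion M[n] ⊆ M.) -/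
/-- Abstract norm computation for a (not necessarily compatible) family of endomorphisms
`σ` and a "cocycle" `f` with values in a commutative group. -/
private lemma cocycle_norm_aux {A : Type v} [CommGroup A] {Γ : Type w} [Group Γ] [Fintype Γ]
    (σ : Γ → A →* A) (f : Γ → Γ → A)
    (hco : ∀ α β γ : Γ, f α β * f (α * β) γ = σ α (f β γ) * f α (β * γ)) (α β : Γ) :
    f α β ^ Fintype.card Γ * (∏ γ, f (α * β) γ) =
      σ α (∏ γ, f β γ) * ∏ γ, f α γ := by
  calc f α β ^ Fintype.card Γ * (∏ γ, f (α * β) γ)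
      = ∏ γ, (f α β * f (α * β) γ) := by
        rw [Finset.prod_mul_distrib, Finset.prod_const, Finset.card_univ]
    _ = ∏ γ, (σ α (f β γ) * f α (β * γ)) := by simp_rw [hco]
    _ = σ α (∏ γ, f β γ) * ∏ γ, f α (β * γ) := by
        rw [Finset.prod_mul_distrib, map_prod]
    _ = _ := by
        rw [Fintype.prod_equiv (Equiv.mulLeft β) (fun γ => f α (β * γ)) (f α) (fun γ => rfl)]

/-- Let `Γ` be a finite group of order `n`, `E` a group, `M` an abelian
normal subgroup of `E`, and `π : E → Γ` a surjective homomorphism with kernel `M`.  Suppose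
every element of `M` is an `n`-th power of an element of `M`.  Then there exist a group `H`,
a surjective homomorphism `p : H → Γ` and a homomorphism `φ : H → E` with `π ∘ φ = p`, such
that `φ` is injective on `ker p` and maps `ker p` bijectively onto
`M[n] = {m ∈ M : mⁿ = 1}`.  (Equivalently: the inverse `ι : M[n] → H` of this bijection is an
injective homomorphism with normal image `ker p`, satisfying `φ ∘ ι = (M[n] ↪ E)` and
`π ∘ φ = p`; so `E` is the pushout of `1 → M[n] → H → Γ → 1` along `M[n] ⊆ M`.) -/
theorem exists_pushout_extension_of_torsion
    {E : Type u} [Group E] (Γ : Type u) [Group Γ] [Finite Γ]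
    (n : ℕ) (hn : Nat.card Γ = n)
    (M : Subgroup E) [M.Normal] (hMab : ∀ x y : M, x * y = y * x)
    (π : E →* Γ) (hπ : Function.Surjective π) (hker : π.ker = M)
    (hdiv : ∀ m ∈ M, ∃ m' ∈ M, m' ^ n = m) :
    ∃ (H : Type u) (_ : Group H) (p : H →* Γ) (φ : H →* E),
      Function.Surjective p ∧
      π.comp φ = p ∧
      Set.InjOn φ (p.ker : Set H) ∧
      φ '' (p.ker : Set H) = {x : E | x ∈ M ∧ x ^ n = 1} := by
  classical
  letI : Fintype Γ := Fintype.ofFinite Γ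
  have hcard : Fintype.card Γ = n := by rw [← Nat.card_eq_fintype_card, hn]
  letI : CommGroup ↥M := { (inferInstance : Group ↥M) with mul_comm := hMab }
  -- commutation of elements of M inside E
  have hcomm : ∀ x y : E, x ∈ M → y ∈ M → x * y = y * x := by
    intro x y hx hy
    exact congrArg Subtype.val (hMab ⟨x, hx⟩ ⟨y, hy⟩)
  -- a set-theoretic section of π, normalized at 1
  set s : Γ → E := fun γ => if γ = 1 then 1 else Function.surjInv hπ γ with hs_def
  have hs : ∀ γ, π (s γ) = γ := by
    intro γ
    by_cases h : γ = 1
    · simp [hs_def, h]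
    · simp [hs_def, h, Function.surjInv_eq hπ]
  have hs1 : s 1 = 1 := by simp [hs_def]
  -- conjugation on M by elements of E
  have hconjmem : ∀ (e : E) (m : E), m ∈ M → e * m * e⁻¹ ∈ M := by
    intro e m hm
    exact (inferInstance : M.Normal).conj_mem m hm e
  let σ : Γ → (↥M →* ↥M) := fun γ =>
    { toFun := fun m => ⟨s γ * ↑m * (s γ)⁻¹, hconjmem _ _ m.2⟩
      map_one' := by ext; simp
      map_mul' := by
        intro a b
        ext
        push_cast
        group }
  have hσ : ∀ (γ : Γ) (m : ↥M), (↑(σ γ m) : E) = s γ * ↑m * (s γ)⁻¹ := fun γ m => rfl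
  -- the cocycle of s
  have hfmem : ∀ α β : Γ, s α * s β * (s (α * β))⁻¹ ∈ M := by
    intro α β
    rw [← hker, MonoidHom.mem_ker]
    simp only [map_mul, map_inv, hs]
    group
  let fM : Γ → Γ → ↥M := fun α β => ⟨s α * s β * (s (α * β))⁻¹, hfmem α β⟩
  have hfM : ∀ α β : Γ, (↑(fM α β) : E) = s α * s β * (s (α * β))⁻¹ := fun α β => rfl
  have hco : ∀ α β γ : Γ,
      fM α β * fM (α * β) γ = σ α (fM β γ) * fM α (β * γ) := by
    intro α β γ
    ext
    push_cast [hσ, hfM]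
    rw [mul_assoc α β γ]
    group
  -- the "norm" of the cocycle
  let gM : Γ → ↥M := fun α => ∏ γ, fM α γ
  have key : ∀ α β : Γ,
      fM α β ^ n = σ α (gM β) * gM α * (gM (α * β))⁻¹ := by
    intro α β
    have := cocycle_norm_aux σ fM hco α β
    rw [hcard] at this
    rw [eq_mul_inv_iff_mul_eq]
    exact this
  -- n-th roots of the norm
  have hroot : ∀ α : Γ, ∃ m : ↥M, m ^ n = gM α := by
    intro α
    obtain ⟨m', hm', hpow⟩ := hdiv ↑(gM α) (gM α).2
    exact ⟨⟨m', hm'⟩, by ext; push_cast; exact hpow⟩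
  choose hM hMpow using hroot
  -- the modified section
  set s' : Γ → E := fun γ => (↑(hM γ))⁻¹ * s γ with hs'_def
  have hπs' : ∀ γ, π (s' γ) = γ := by
    intro γ
    have h1 : π ↑(hM γ) = 1 := by
      rw [← MonoidHom.mem_ker, hker]; exact (hM γ).2
    simp [hs'_def, h1, hs]
  -- the modified cocycle
  have hFmem : ∀ α β : Γ, s' α * s' β * (s' (α * β))⁻¹ ∈ M := by
    intro α β
    rw [← hker, MonoidHom.mem_ker]
    simp only [map_mul, map_inv, hπs']
    group
  let FM : Γ → Γ → ↥M := fun α β => ⟨s' α * s' β * (s' (α * β))⁻¹, hFmem α β⟩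
  have hFM_eq : ∀ α β : Γ,
      FM α β = (hM α)⁻¹ * (σ α (hM β))⁻¹ * fM α β * hM (α * β) := by
    intro α β
    ext
    show s' α * s' β * (s' (α * β))⁻¹ = _
    push_cast [hσ, hfM, hs'_def]
    group
  have hFn : ∀ α β : Γ, FM α β ^ n = 1 := by
    intro α β
    rw [hFM_eq, mul_pow, mul_pow, mul_pow, inv_pow, inv_pow, ← map_pow, hMpow, hMpow,
      hMpow, key]
    group
  -- torsion part of M as a predicate
  set P : E → Prop := fun x => x ∈ M ∧ x ^ n = 1 with hP_def
  have Pmul : ∀ x y : E, P x → P y → P (x * y) := by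
    intro x y hx hy
    refine ⟨M.mul_mem hx.1 hy.1, ?_⟩
    rw [(Commute.mul_pow (by exact hcomm x y hx.1 hy.1)), hx.2, hy.2, one_mul]
  have Pinv : ∀ x : E, P x → P x⁻¹ := by
    intro x hx
    exact ⟨M.inv_mem hx.1, by rw [inv_pow, hx.2, inv_one]⟩
  have Pconj : ∀ (e x : E), P x → P (e * x * e⁻¹) := by
    intro e x hx
    refine ⟨hconjmem e x hx.1, ?_⟩
    rw [conj_pow, hx.2, mul_one, mul_inv_cancel]
  have Pone : P 1 := ⟨M.one_mem, one_pow n⟩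
  -- `hM 1` is torsion
  have hgM1 : gM 1 = 1 := by
    have h1 : ∀ γ : Γ, fM 1 γ = 1 := by
      intro γ
      ext
      push_cast [hfM, hs1, one_mul]
      simp [hs1]
    simp [gM, h1]
  have PhM1 : P ↑(hM 1) := by
    refine ⟨(hM 1).2, ?_⟩
    have : (hM 1) ^ n = 1 := by rw [hMpow, hgM1]
    calc (↑(hM 1) : E) ^ n = ↑(hM 1 ^ n) := by push_cast; ring_nf
    _ = 1 := by rw [this]; rfl
  have hs'1 : s' 1 = (↑(hM 1))⁻¹ := by simp [hs'_def, hs1]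
  have PF : ∀ α β : Γ, P (s' α * s' β * (s' (α * β))⁻¹) := by
    intro α β
    refine ⟨hFmem α β, ?_⟩
    have := hFn α β
    calc (s' α * s' β * (s' (α * β))⁻¹) ^ n = ↑(FM α β ^ n) := by push_cast; rfl
    _ = 1 := by rw [this]; rfl
  -- the subgroup H of E
  let H : Subgroup E :=
    { carrier := {x | P ((s' (π x))⁻¹ * x)}
      one_mem' := by
        show P ((s' (π 1))⁻¹ * 1)
        rw [map_one, hs'1, inv_inv, mul_one]
        exact PhM1
      mul_mem' := by
        intro a b ha hb
        show P ((s' (π (a * b)))⁻¹ * (a * b))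
        have hab : (s' (π (a * b)))⁻¹ * (a * b) =
            ((s' (π a * π b))⁻¹ * (s' (π a) * s' (π b) * (s' (π a * π b))⁻¹) *
              ((s' (π a * π b))⁻¹)⁻¹) *
            (((s' (π b))⁻¹ * ((s' (π a))⁻¹ * a) * ((s' (π b))⁻¹)⁻¹) *
            ((s' (π b))⁻¹ * b)) := by
          rw [map_mul]
          group
        rw [hab]
        exact Pmul _ _ (Pconj _ _ (PF (π a) (π b)))
          (Pmul _ _ (Pconj _ _ ha) hb)
      inv_mem' := by
        intro a ha
        show P ((s' (π a⁻¹))⁻¹ * a⁻¹)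
        have hai : (s' (π a⁻¹))⁻¹ * a⁻¹ =
            ((s' (π a)⁻¹)⁻¹ * ((s' (π a))⁻¹ * a)⁻¹ * ((s' (π a)⁻¹)⁻¹)⁻¹) *
            ((s' (π a * (π a)⁻¹))⁻¹ *
              (s' (π a) * s' ((π a)⁻¹) * (s' (π a * (π a)⁻¹))⁻¹)⁻¹) := by
          rw [map_inv]
          group
        rw [hai]
        refine Pmul _ _ (Pconj _ _ (Pinv _ ha)) (Pmul _ _ ?_ (Pinv _ (PF (π a) (π a)⁻¹)))
        rw [mul_inv_cancel, hs'1, inv_inv]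
        exact PhM1 }
  refine ⟨↥H, inferInstance, π.comp H.subtype, H.subtype, ?_, rfl, ?_, ?_⟩
  · -- surjectivity of p
    intro γ
    refine ⟨⟨s' γ, ?_⟩, ?_⟩
    · show P ((s' (π (s' γ)))⁻¹ * s' γ)
      rw [hπs', inv_mul_cancel]
      exact Pone
    · show π (s' γ) = γ
      exact hπs' γ
  · -- injectivity on the kernel
    exact fun x _ y _ h => Subtype.ext h
  · -- image of the kernel
    ext x
    constructor
    · rintro ⟨⟨y, hy⟩, hk, rfl⟩
      have hk' : π y = 1 := hk
      have hy' : P ((s' (π y))⁻¹ * y) := hy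
      rw [hk', hs'1, inv_inv] at hy'
      have : y = (↑(hM 1))⁻¹ * (↑(hM 1) * y) := by group
      rw [show (H.subtype ⟨y, hy⟩ : E) = y from rfl, this]
      exact Pmul _ _ (Pinv _ PhM1) hy'
    · intro hx
      have hx1 : π x = 1 := by rw [← MonoidHom.mem_ker, hker]; exact hx.1
      have hmem : x ∈ H := by
        show P ((s' (π x))⁻¹ * x)
        rw [hx1, hs'1, inv_inv]
        exact Pmul _ _ PhM1 hx
      exact ⟨⟨x, hmem⟩, by show π x = 1; exact hx1, rfl⟩
end

section
/- Let A be a discrete valuation ring with fraction field K and normalized valuation v, and let B be a bounded subgroup of GL_n(K). Then there exists g ∈ GL_n(K) such that g B g⁻¹ ⊆ GL_n(A), where GL_n(A) is viewed as a subgroup of GL_n(K) via the inclusion A ⊆ K. -/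
open Matrix

/-- Let `A` be a DVR with fraction field `K` and normalized valuation `v`
(so that `A` is exactly the set of elements of nonnegative valuation), and let `B` be a
bounded subgroup of `GL n K`.  Then there is `g ∈ GL n K` with `g B g⁻¹ ⊆ GL n A`, where
`GL n A` is viewed inside `GL n K` as the range of the map induced by `A ⊆ K`. -/
theorem exists_conjugate_subset_genLinearGroup_of_bounded
    (A : Type*) [CommRing A] [IsDomain A] [IsDiscreteValuationRing A]
    (K : Type*) [Field K] [Algebra A K] [IsFractionRing A K]
    (v : AddValuation K (WithTop ℤ))
    (hv : ∀ x : K, 0 ≤ v x ↔ x ∈ (algebraMap A K).range)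
    (hnorm : Function.Surjective fun x : K => v x)
    (n : ℕ) (B : Subgroup (GL (Fin n) K))
    (hB : ∃ c : ℤ, ∀ b ∈ B, ∀ i j : Fin n,
      (c : WithTop ℤ) ≤ v ((b : Matrix (Fin n) (Fin n) K) i j)) :
    ∃ g : GL (Fin n) K, ∀ b ∈ B,
      g * b * g⁻¹ ∈ (Matrix.GeneralLinearGroup.map (n := Fin n) (algebraMap A K)).range := by
  classical
  obtain ⟨c₀, hc₀⟩ := hB
  set c : ℤ := min c₀ 0 with hcdef
  have hc : ∀ b ∈ B, ∀ i j : Fin n, (c : WithTop ℤ) ≤ v ((b : Matrix (Fin n) (Fin n) K) i j) :=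
    fun b hb i j => le_trans (by exact_mod_cast min_le_left c₀ 0) (hc₀ b hb i j)
  have hcle : c ≤ 0 := min_le_right _ _
  obtain ⟨t, ht⟩ := hnorm (c : WithTop ℤ)
  replace ht : v t = (c : WithTop ℤ) := ht
  have htne : t ≠ 0 := by
    intro h; rw [h] at ht; simp [AddValuation.map_zero] at ht
  -- the set of columns of elements of B
  set S : Set (Fin n → K) :=
    {x | ∃ b ∈ B, ∃ j : Fin n, x = fun i => (b : Matrix (Fin n) (Fin n) K) i j} with hSdef
  set L : Submodule A (Fin n → K) := Submodule.span A S with hLdef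
  -- B stabilizes L
  have stab : ∀ b ∈ B, ∀ x ∈ L, (b : Matrix (Fin n) (Fin n) K).mulVec x ∈ L := by
    intro b hb x hx
    have : L ≤ Submodule.comap
        (((b : Matrix (Fin n) (Fin n) K).mulVecLin).restrictScalars A) L := by
      rw [hLdef]
      apply Submodule.span_le.mpr
      rintro y ⟨b', hb', j, rfl⟩
      simp only [SetLike.mem_coe, Submodule.mem_comap, LinearMap.coe_restrictScalars, Matrix.mulVecLin_apply]
      apply Submodule.subset_span
      refine ⟨b * b', mul_mem hb hb', j, ?_⟩
      funext i
      simp [Matrix.mulVec, dotProduct, Matrix.mul_apply, Units.val_mul]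
    have hx2 := this hx
    simpa only [Submodule.mem_comap, LinearMap.coe_restrictScalars, Matrix.mulVecLin_apply] using hx2
  -- every element of L has all coordinates of valuation ≥ c
  have hvA : ∀ a : A, (0 : WithTop ℤ) ≤ v (algebraMap A K a) :=
    fun a => (hv _).mpr ⟨a, rfl⟩
  set L₁ : Submodule A (Fin n → K) :=
    { carrier := {x | ∀ i, (c : WithTop ℤ) ≤ v (x i)}
      add_mem' := by
        intro x y hx hy i
        exact v.map_le_add (hx i) (hy i)
      zero_mem' := by
        intro i
        simp only [Pi.zero_apply, AddValuation.map_zero]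
        exact le_top
      smul_mem' := by
        intro a x hx i
        have : (a • x) i = algebraMap A K a * x i := by
          simp [Algebra.smul_def]
        rw [this, v.map_mul]
        calc (c : WithTop ℤ) = 0 + (c : WithTop ℤ) := by rw [zero_add]
          _ ≤ v (algebraMap A K a) + v (x i) := add_le_add (hvA a) (hx i) } with hL₁def
  have hLL₁ : L ≤ L₁ := by
    rw [hLdef]
    apply Submodule.span_le.mpr
    rintro y ⟨b, hb, j, rfl⟩
    intro i
    exact hc b hb i j
  -- elements of L become integral after multiplying by t⁻¹
  have htinv : ∀ x ∈ L, ∀ i, ∃ a : A, algebraMap A K a = t⁻¹ * x i := by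
    intro x hx i
    have hxi : (c : WithTop ℤ) ≤ v (x i) := hLL₁ hx i
    have h0 : (0 : WithTop ℤ) ≤ v (t⁻¹ * x i) := by
      by_contra hcon
      push_neg at hcon
      have : v (t * (t⁻¹ * x i)) < v t + 0 :=
        by rw [v.map_mul]; exact WithTop.add_lt_add_left (by rw [ht]; exact WithTop.coe_ne_top) hcon
      rw [add_zero, ht] at this
      rw [mul_inv_cancel_left₀ htne] at this
      exact absurd hxi (not_le_of_gt this)
    obtain ⟨a, ha⟩ := (hv _).mp h0
    exact ⟨a, ha⟩
  -- the linear map (Fin n → A) → (Fin n → K), a ↦ t • algebraMap ∘ a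
  set φ : (Fin n → A) →ₗ[A] (Fin n → K) :=
    { toFun := fun a => fun i => t * algebraMap A K (a i)
      map_add' := by
        intro a a'
        funext i
        simp [map_add, mul_add]
      map_smul' := by
        intro r a
        funext i
        simp [Algebra.smul_def, _root_.map_mul]
        ring } with hφdef
  have hφ : ∀ a i, φ a i = t * algebraMap A K (a i) := fun a i => rfl
  have hφinj : Function.Injective φ := by
    intro a a' h
    funext i
    have := congrFun h i
    rw [hφ, hφ] at this
    exact IsFractionRing.injective A K (mul_left_cancel₀ htne this)
  have hLrange : ∀ x ∈ L, ∃ a : Fin n → A, φ a = x := by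
    intro x hx
    choose a ha using htinv x hx
    refine ⟨a, funext fun i => ?_⟩
    rw [hφ, ha i, mul_inv_cancel_left₀ htne]
  set P : Submodule A (Fin n → A) := Submodule.comap φ L with hPdef
  obtain ⟨m, bP⟩ := Submodule.basisOfPid (Pi.basisFun A (Fin n)) P
  set ψ : P →ₗ[A] L := LinearMap.codRestrict L (φ.comp P.subtype) (fun p => p.2) with hψdef
  have hψbij : Function.Bijective ψ := by
    constructor
    · intro p q h
      apply Subtype.ext
      apply hφinj
      exact congrArg Subtype.val h
    · rintro ⟨x, hx⟩
      obtain ⟨a, ha⟩ := hLrange x hx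
      refine ⟨⟨a, ?_⟩, ?_⟩
      · show φ a ∈ L
        rw [ha]; exact hx
      · apply Subtype.ext
        exact ha
  set bL : Module.Basis (Fin m) A L := bP.map (LinearEquiv.ofBijective ψ hψbij) with hbLdef
  set w : Fin m → (Fin n → K) := fun i => (bL i : Fin n → K) with hwdef
  have liA : LinearIndependent A w := bL.linearIndependent.map' L.subtype L.ker_subtype
  have liK : LinearIndependent K w := (LinearIndependent.iff_fractionRing A K).mp liA
  have hspanA : Submodule.span A (Set.range w) = L := by
    have hr : Set.range w = L.subtype '' Set.range bL := by
      rw [← Set.range_comp]; rfl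
    rw [hr, Submodule.span_image, bL.span_eq, Submodule.map_top, Submodule.range_subtype]
  have hsingle : ∀ j : Fin n, Pi.single j (1 : K) ∈ L := by
    intro j
    apply Submodule.subset_span
    refine ⟨1, one_mem B, j, ?_⟩
    funext i
    simp [Units.val_one, Matrix.one_apply, Pi.single_apply]
  have hspanK : ⊤ ≤ Submodule.span K (Set.range w) := by
    rw [← (Pi.basisFun K (Fin n)).span_eq]
    apply Submodule.span_le.mpr
    rintro y ⟨j, rfl⟩
    have hyL : ((Pi.basisFun K (Fin n)) j : Fin n → K) ∈ L := by
      rw [Pi.basisFun_apply]; exact hsingle j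
    have hsub := Submodule.span_le_restrictScalars A K (Set.range w)
    rw [hspanA] at hsub
    exact hsub hyL
  set bKK : Module.Basis (Fin m) K (Fin n → K) := Module.Basis.mk liK hspanK with hbKKdef
  have hmn : m = n := by
    have e := bKK.indexEquiv (Pi.basisFun K (Fin n))
    simpa using Fintype.card_congr e
  symm at hmn
  subst hmn
  set h : Matrix (Fin n) (Fin n) K := (Pi.basisFun K (Fin n)).toMatrix ⇑bKK with hhdef
  haveI : Invertible h := (Pi.basisFun K (Fin n)).invertibleToMatrix bKK
  have hhw : ∀ i j, h i j = w j i := by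
    intro i j
    rw [hhdef, Module.Basis.toMatrix_apply, Pi.basisFun_repr, hbKKdef, Module.Basis.mk_apply]
  set hu : GL (Fin n) K := unitOfInvertible h with hhu
  have hwL : ∀ j, w j ∈ L := fun j => (bL j).2
  set yv : ↥B → Fin n → L := fun b j =>
    ⟨((b : GL (Fin n) K) : Matrix (Fin n) (Fin n) K).mulVec (w j),
      stab _ b.2 _ (hwL j)⟩ with hyvdef
  set Cm : ↥B → Matrix (Fin n) (Fin n) A := fun b =>
    Matrix.of fun i j => bL.repr (yv b j) i with hCmdef
  have hCm : ∀ (b : B) (i j : Fin n), Cm b i j = bL.repr (yv b j) i := fun _ _ _ => rfl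
  have key : ∀ (b : B) (i j : Fin n), ∑ k, h i k * algebraMap A K (Cm b k j)
      = (((b : GL (Fin n) K) : Matrix (Fin n) (Fin n) K) * h) i j := by
    intro b i j
    have hs := congrArg L.subtype (bL.sum_repr (yv b j))
    simp only [map_sum, _root_.map_smul] at hs
    have hs2 := congrFun hs i
    simp only [Finset.sum_apply, SetLike.val_smul, Pi.smul_apply, Algebra.smul_def, Submodule.coe_subtype] at hs2
    calc ∑ k, h i k * algebraMap A K (Cm b k j)
        = ∑ k, algebraMap A K (bL.repr (yv b j) k) * w k i := by
          apply Finset.sum_congr rfl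
          intro k _
          rw [hhw i k, hCm, mul_comm]
      _ = ((((b : GL (Fin n) K) : Matrix (Fin n) (Fin n) K)).mulVec (w j)) i := hs2
      _ = (((b : GL (Fin n) K) : Matrix (Fin n) (Fin n) K) * h) i j := by
          rw [Matrix.mul_apply, Matrix.mulVec, dotProduct]
          apply Finset.sum_congr rfl
          intro k _
          rw [hhw k j]
  have keyM : ∀ b : B, (Cm b).map (algebraMap A K)
      = ((hu⁻¹ * (b : GL (Fin n) K) * hu : GL (Fin n) K) : Matrix (Fin n) (Fin n) K) := by
    intro b
    have h1 : h * (Cm b).map (algebraMap A K)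
        = ((b : GL (Fin n) K) : Matrix (Fin n) (Fin n) K) * h := by
      ext i j
      rw [Matrix.mul_apply]
      simp only [Matrix.map_apply]
      exact key b i j
    have hval : ((hu⁻¹ * (b : GL (Fin n) K) * hu : GL (Fin n) K) : Matrix (Fin n) (Fin n) K)
        = ⅟h * (((b : GL (Fin n) K) : Matrix (Fin n) (Fin n) K) * h) := by
      simp only [Units.val_mul, hhu]
      rw [mul_assoc]
      rfl
    rw [hval, ← h1, ← mul_assoc, invOf_mul_self, one_mul]
  have injM : Function.Injective (fun M : Matrix (Fin n) (Fin n) A => M.map (algebraMap A K)) := by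
    intro M N hMN
    ext i j
    apply IsFractionRing.injective A K
    have := congrArg (fun M : Matrix (Fin n) (Fin n) K => M i j) hMN
    simpa [Matrix.map_apply] using this
  have hCmul : ∀ b b' : B, Cm b * Cm b' = Cm (b * b') := by
    intro b b'
    apply injM
    show (Cm b * Cm b').map (algebraMap A K) = (Cm (b * b')).map (algebraMap A K)
    rw [Matrix.map_mul, keyM, keyM, keyM]
    rw [show ((↑(b * b') : GL (Fin n) K)) = (↑b : GL (Fin n) K) * ↑b' from rfl]
    rw [← Units.val_mul]
    congr 1
    group
  have C1 : Cm 1 = 1 := by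
    apply injM
    show (Cm 1).map (algebraMap A K) = (1 : Matrix (Fin n) (Fin n) A).map (algebraMap A K)
    rw [keyM]
    rw [show ((↑(1 : B) : GL (Fin n) K)) = 1 from rfl]
    rw [Matrix.map_one _ (map_zero _) (map_one _)]
    rw [mul_one, inv_mul_cancel, Units.val_one]
  refine ⟨hu⁻¹, ?_⟩
  intro b hb
  refine ⟨⟨Cm ⟨b, hb⟩, Cm (⟨b, hb⟩ : B)⁻¹, ?_, ?_⟩, ?_⟩
  · rw [hCmul, mul_inv_cancel, C1]
  · rw [hCmul, inv_mul_cancel, C1]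
  · apply Units.ext
    show (Cm ⟨b, hb⟩).map (algebraMap A K) = _
    rw [keyM ⟨b, hb⟩]
    congr 1
end
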